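/- Let μ, ν ∈ 𝓜 both satisfy condition (M.1) and suppose (M.2) holds for the pair (μ,ν). Let c : ℝ → ℝ be continuous with c* := inf_{t∈ℝ} c(t) > 0, and let F ∈ 𝓔(ℝ,ℝ,μ,ν). Then the function t ↦ ∫_{−∞}^{t} e^{−∫_{s}^{t} c(u) du} F(s) ds is bounded, continuous, and belongs to 𝓔(ℝ,ℝ,μ,ν). -/

import Mathlib

open MeasureTheory Filter Topology Set
open scoped ENNReal NNReal

noncomputable section

/-- The class `𝓜` of positive measures on `ℝ`: infinite total mass, finite on compact
intervals. -/
def InM (μ : Measure ℝ) : Prop :=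
  μ Set.univ = ⊤ ∧ ∀ s t : ℝ, s ≤ t → μ (Set.Icc s t) < ⊤

/-- Bohr almost periodic function. -/
def AP {E : Type*} [NormedAddCommGroup E] (f : ℝ → E) : Prop :=
  Continuous f ∧ ∀ ε : ℝ, 0 < ε → ∃ l : ℝ, 0 < l ∧ ∀ a : ℝ,
    ∃ τ ∈ Set.Icc a (a + l), ∀ t : ℝ, ‖f (t + τ) - f t‖ < ε

/-- Bounded continuous function. -/
def BC {E : Type*} [NormedAddCommGroup E] (f : ℝ → E) : Prop :=
  Continuous f ∧ ∃ C : ℝ, ∀ t : ℝ, ‖f t‖ ≤ C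

/-- The ergodic space `𝓔(ℝ, E, μ, ν)`. -/
def Erg {E : Type*} [NormedAddCommGroup E] (μ ν : Measure ℝ) (f : ℝ → E) : Prop :=
  BC f ∧ Filter.Tendsto (fun z : ℝ =>
      ((ν (Set.Icc (-z) z)).toReal)⁻¹ * ∫ t in Set.Icc (-z) z, ‖f t‖ ∂μ)
    Filter.atTop (nhds 0)

/-- `(μ,ν)`-pseudo almost periodic functions `𝓟𝓐𝓟(ℝ, E, μ, ν)`. -/
def PAP {E : Type*} [NormedAddCommGroup E] (μ ν : Measure ℝ) (f : ℝ → E) : Prop :=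
  BC f ∧ ∃ g φ : ℝ → E, AP g ∧ Erg μ ν φ ∧ ∀ t, f t = g t + φ t

/-- Condition (M.1). -/
def M1 (μ : Measure ℝ) : Prop :=
  ∀ τ : ℝ, ∃ β : ℝ, 0 < β ∧ ∃ a b : ℝ, ∀ A : Set ℝ, MeasurableSet A →
    A ∩ Set.Icc a b = ∅ → μ ((fun x => x + τ) '' A) ≤ ENNReal.ofReal β * μ A

/-- Condition (M.2). -/
def M2 (μ ν : Measure ℝ) : Prop :=
  Filter.limsup (fun r : ℝ => μ (Set.Icc (-r) r) / ν (Set.Icc (-r) r)) Filter.atTop < ⊤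

namespace CPE

variable {μ ν : Measure ℝ}

lemma finIcc (hμ : InM μ) (x y : ℝ) : μ (Set.Icc x y) < ⊤ := by
  rcases le_or_gt x y with h | h
  · exact hμ.2 x y h
  · simp [Set.Icc_eq_empty_of_lt h]

lemma tendsto_icc_top (hν : InM ν) :
    Tendsto (fun z : ℝ => ν (Set.Icc (-z) z)) atTop (𝓝 ⊤) := by
  have hseq : Tendsto (fun n : ℕ => ν (Set.Icc (-(n : ℝ)) n)) atTop (𝓝 ⊤) := by
    have hU : (⋃ n : ℕ, Set.Icc (-(n : ℝ)) n) = Set.univ := by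
      ext x
      simp only [Set.mem_iUnion, Set.mem_Icc, Set.mem_univ, iff_true]
      obtain ⟨n, hn⟩ := exists_nat_ge |x|
      exact ⟨n, neg_le_of_abs_le hn, le_of_abs_le hn⟩
    have hmono : Monotone (fun n : ℕ => Set.Icc (-(n : ℝ)) n) := by
      intro a b hab
      have : (a : ℝ) ≤ b := Nat.cast_le.2 hab
      exact Set.Icc_subset_Icc (by linarith) this
    have := tendsto_measure_iUnion_atTop (μ := ν) hmono
    rwa [hU, hν.1] at this
  rw [ENNReal.tendsto_nhds_top_iff_nnreal]
  intro x
  have : ∀ᶠ n : ℕ in atTop, (x : ℝ≥0∞) < ν (Set.Icc (-(n : ℝ)) n) :=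
    hseq.eventually (lt_mem_nhds (by simp [ENNReal.coe_lt_top] : (x : ℝ≥0∞) < ⊤))
  obtain ⟨n, hn⟩ := this.exists
  filter_upwards [eventually_ge_atTop (n : ℝ)] with z hz
  exact hn.trans_le (measure_mono (Set.Icc_subset_Icc (by linarith) hz))

lemma map_shift (hμ1 : M1 μ) (r : ℝ) :
    ∃ β : ℝ, 0 < β ∧ ∃ a b : ℝ, ∀ A : Set ℝ, MeasurableSet A →
      A ∩ Set.Icc a b = ∅ → μ.map (fun t => t - r) A ≤ ENNReal.ofReal β * μ A := by
  obtain ⟨β, hβ, a, b, hab⟩ := hμ1 r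
  refine ⟨β, hβ, a, b, fun A hA hAI => ?_⟩
  rw [Measure.map_apply (measurable_sub_const r) hA]
  have himg : (fun t => t - r) ⁻¹' A = (fun x => x + r) '' A := by
    ext x
    constructor
    · intro hx
      exact ⟨x - r, hx, by ring⟩
    · rintro ⟨y, hy, rfl⟩
      simpa using hy
  rw [himg]
  exact hab A hA hAI

lemma lintegral_shift_le (hμ : InM μ) (hμ1 : M1 μ) {g : ℝ → ℝ≥0∞} (hg : Measurable g)
    {M : ℝ≥0∞} (hgM : ∀ t, g t ≤ M) (hM : M ≠ ⊤) {r : ℝ} (hr : 0 ≤ r) :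
    ∃ β C : ℝ≥0∞, β ≠ ⊤ ∧ C ≠ ⊤ ∧ ∀ z : ℝ,
      ∫⁻ t in Set.Icc (-z) z, g (t - r) ∂μ ≤
        β * ∫⁻ t in Set.Icc (-(z + r)) (z + r), g t ∂μ + C := by
  obtain ⟨β, hβ, a, b, hab⟩ := map_shift hμ1 r
  set ω : Measure ℝ := μ.map (fun t => t - r) with hω
  have hωI : ω (Set.Icc a b) < ⊤ := by
    rw [hω, Measure.map_apply (measurable_sub_const r) measurableSet_Icc]
    have : (fun t => t - r) ⁻¹' Set.Icc a b = Set.Icc (a + r) (b + r) := by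
      ext x; simp only [Set.mem_preimage, Set.mem_Icc]
      constructor <;> (rintro ⟨h1, h2⟩; exact ⟨by linarith, by linarith⟩)
    rw [this]
    exact finIcc hμ _ _
  refine ⟨ENNReal.ofReal β, M * ω (Set.Icc a b), ENNReal.ofReal_ne_top,
    ENNReal.mul_ne_top hM hωI.ne, fun z => ?_⟩
  set S : Set ℝ := Set.Icc (-z - r) (z - r) with hS
  have hstep1 : ∫⁻ t in Set.Icc (-z) z, g (t - r) ∂μ = ∫⁻ u in S, g u ∂ω := by
    rw [hω, setLIntegral_map measurableSet_Icc hg (measurable_sub_const r)]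
    have : (fun t => t - r) ⁻¹' S = Set.Icc (-z) z := by
      ext x; simp only [hS, Set.mem_preimage, Set.mem_Icc]
      constructor <;> (rintro ⟨h1, h2⟩; exact ⟨by linarith, by linarith⟩)
    rw [this]
  rw [hstep1, ← lintegral_inter_add_diff (B := Set.Icc a b) g S measurableSet_Icc]
  have h1 : ∫⁻ u in S ∩ Set.Icc a b, g u ∂ω ≤ M * ω (Set.Icc a b) := by
    calc ∫⁻ u in S ∩ Set.Icc a b, g u ∂ω ≤ ∫⁻ _ in S ∩ Set.Icc a b, M ∂ω :=
          lintegral_mono fun u => hgM u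
    _ = M * ω (S ∩ Set.Icc a b) := by rw [setLIntegral_const]
    _ ≤ M * ω (Set.Icc a b) := mul_le_mul_right (measure_mono Set.inter_subset_right) M
  have h2 : ∫⁻ u in S \ Set.Icc a b, g u ∂ω ≤
      ENNReal.ofReal β * ∫⁻ t in Set.Icc (-(z + r)) (z + r), g t ∂μ := by
    have hSm : MeasurableSet (S \ Set.Icc a b) := measurableSet_Icc.diff measurableSet_Icc
    have hle : ω.restrict (S \ Set.Icc a b) ≤
        (ENNReal.ofReal β) • (μ.restrict (S \ Set.Icc a b)) := by
      refine Measure.le_iff.2 fun s hs => ?_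
      rw [Measure.restrict_apply hs, Measure.smul_apply, Measure.restrict_apply hs,
        smul_eq_mul]
      refine hab _ (hs.inter hSm) ?_
      rw [Set.eq_empty_iff_forall_notMem]
      rintro x ⟨⟨hx1, hx2⟩, hx3⟩
      exact hx2.2 hx3
    calc ∫⁻ u in S \ Set.Icc a b, g u ∂ω ≤
        ∫⁻ u, g u ∂((ENNReal.ofReal β) • (μ.restrict (S \ Set.Icc a b))) :=
          lintegral_mono' hle le_rfl
    _ = ENNReal.ofReal β * ∫⁻ u in S \ Set.Icc a b, g u ∂μ := by
          rw [lintegral_smul_measure, smul_eq_mul]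
    _ ≤ ENNReal.ofReal β * ∫⁻ t in Set.Icc (-(z + r)) (z + r), g t ∂μ := by
          refine mul_le_mul_right (lintegral_mono_set ?_) _
          refine Set.diff_subset.trans (Set.Icc_subset_Icc (by linarith) (by linarith))
  calc ∫⁻ u in S ∩ Set.Icc a b, g u ∂ω + ∫⁻ u in S \ Set.Icc a b, g u ∂ω
      ≤ M * ω (Set.Icc a b) + ENNReal.ofReal β * ∫⁻ t in Set.Icc (-(z + r)) (z + r), g t ∂μ :=
        add_le_add h1 h2
  _ = ENNReal.ofReal β * ∫⁻ t in Set.Icc (-(z + r)) (z + r), g t ∂μ + M * ω (Set.Icc a b) :=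
        add_comm _ _


lemma nu_growth (hν1 : M1 ν) {r : ℝ} (hr : 0 ≤ r) :
    ∃ κ : ℝ≥0∞, κ ≠ 0 ∧ κ ≠ ⊤ ∧ ∀ᶠ z in atTop,
      ν (Set.Icc (-(z + r)) (z + r)) ≤ κ * ν (Set.Icc (-z) z) := by
  obtain ⟨β₁, hβ₁, a₁, b₁, h₁⟩ := hν1 r
  obtain ⟨β₂, hβ₂, a₂, b₂, h₂⟩ := hν1 (-r)
  refine ⟨1 + ENNReal.ofReal β₁ + ENNReal.ofReal β₂, ?_, ?_, ?_⟩
  · intro h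
    simp only [add_eq_zero, one_ne_zero, false_and] at h
  · exact ENNReal.add_ne_top.2 ⟨ENNReal.add_ne_top.2 ⟨ENNReal.one_ne_top, ENNReal.ofReal_ne_top⟩,
      ENNReal.ofReal_ne_top⟩
  · filter_upwards [eventually_ge_atTop (max (max (b₁ + r + 1) (r - a₂ + 1)) r)] with z hz
    have hz1 : b₁ < z - r := by
      have := le_trans (le_max_left _ _) (le_trans (le_max_left _ _) hz); linarith
    have hz2 : -z + r < a₂ := by
      have := le_trans (le_max_right _ _) (le_trans (le_max_left _ _) hz); linarith
    have hzr : r ≤ z := le_trans (le_max_right _ _) hz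
    have hsub : Set.Icc (-(z + r)) (z + r) ⊆
        Set.Icc (-(z + r)) (-z) ∪ (Set.Icc (-z) z ∪ Set.Icc z (z + r)) := by
      intro x hx
      rcases le_or_gt x (-z) with h | h
      · exact Or.inl ⟨hx.1, h⟩
      rcases le_or_gt x z with h' | h'
      · exact Or.inr (Or.inl ⟨h.le, h'⟩)
      · exact Or.inr (Or.inr ⟨h'.le, hx.2⟩)
    have hright : ν (Set.Icc z (z + r)) ≤ ENNReal.ofReal β₁ * ν (Set.Icc (-z) z) := by
      have himg : (fun x => x + r) '' Set.Icc (z - r) z = Set.Icc z (z + r) := by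
        rw [Set.image_add_const_Icc]
        congr 1
        ring
      have hd : Set.Icc (z - r) z ∩ Set.Icc a₁ b₁ = ∅ := by
        rw [Set.eq_empty_iff_forall_notMem]
        rintro x ⟨⟨hx1, _⟩, ⟨_, hx4⟩⟩
        linarith
      calc ν (Set.Icc z (z + r)) = ν ((fun x => x + r) '' Set.Icc (z - r) z) := by rw [himg]
      _ ≤ ENNReal.ofReal β₁ * ν (Set.Icc (z - r) z) := h₁ _ measurableSet_Icc hd
      _ ≤ ENNReal.ofReal β₁ * ν (Set.Icc (-z) z) :=
          mul_le_mul_right (measure_mono (Set.Icc_subset_Icc (by linarith) le_rfl)) _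
    have hleft : ν (Set.Icc (-(z + r)) (-z)) ≤ ENNReal.ofReal β₂ * ν (Set.Icc (-z) z) := by
      have himg : (fun x => x + -r) '' Set.Icc (-z) (-z + r) = Set.Icc (-(z + r)) (-z) := by
        rw [Set.image_add_const_Icc]
        congr 1 <;> ring
      have hd : Set.Icc (-z) (-z + r) ∩ Set.Icc a₂ b₂ = ∅ := by
        rw [Set.eq_empty_iff_forall_notMem]
        rintro x ⟨⟨_, hx2⟩, ⟨hx3, _⟩⟩
        linarith
      calc ν (Set.Icc (-(z + r)) (-z)) = ν ((fun x => x + -r) '' Set.Icc (-z) (-z + r)) := by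
            rw [himg]
      _ ≤ ENNReal.ofReal β₂ * ν (Set.Icc (-z) (-z + r)) := h₂ _ measurableSet_Icc hd
      _ ≤ ENNReal.ofReal β₂ * ν (Set.Icc (-z) z) :=
          mul_le_mul_right (measure_mono (Set.Icc_subset_Icc le_rfl (by linarith))) _
    calc ν (Set.Icc (-(z + r)) (z + r)) ≤
        ν (Set.Icc (-(z + r)) (-z)) + (ν (Set.Icc (-z) z) + ν (Set.Icc z (z + r))) :=
          le_trans (measure_mono hsub) (le_trans (measure_union_le _ _)
            (add_le_add_right (measure_union_le _ _) _))
    _ ≤ ENNReal.ofReal β₂ * ν (Set.Icc (-z) z) +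
          (1 * ν (Set.Icc (-z) z) + ENNReal.ofReal β₁ * ν (Set.Icc (-z) z)) := by
          refine add_le_add hleft (add_le_add (by rw [one_mul]) hright)
    _ = (1 + ENNReal.ofReal β₁ + ENNReal.ofReal β₂) * ν (Set.Icc (-z) z) := by ring

lemma m2_bound (hM2 : M2 μ ν) (hν : InM ν) :
    ∃ K : ℝ≥0∞, K ≠ ⊤ ∧ ∀ᶠ z in atTop, μ (Set.Icc (-z) z) ≤ K * ν (Set.Icc (-z) z) := by
  set L := Filter.limsup (fun r : ℝ => μ (Set.Icc (-r) r) / ν (Set.Icc (-r) r)) Filter.atTop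
  have hL : L < ⊤ := hM2
  refine ⟨L + 1, by simp [hL.ne], ?_⟩
  have hev : ∀ᶠ z in atTop,
      μ (Set.Icc (-z) z) / ν (Set.Icc (-z) z) < L + 1 :=
    Filter.eventually_lt_of_limsup_lt (ENNReal.lt_add_right hL.ne one_ne_zero)
  filter_upwards [hev] with z hz
  rcases eq_or_ne (ν (Set.Icc (-z) z)) 0 with h0 | h0
  · rcases eq_or_ne (μ (Set.Icc (-z) z)) 0 with hμ0 | hμ0
    · simp [hμ0]
    · exfalso
      rw [h0, ENNReal.div_zero hμ0] at hz
      exact (lt_irrefl _ (hz.trans_le le_top)).elim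
  · exact le_of_lt ((ENNReal.div_lt_iff (Or.inl h0) (Or.inl (finIcc hν _ _).ne)).1 hz)


lemma erg_ennreal (hμ : InM μ) (hν : InM ν) {F : ℝ → ℝ} (hFc : Continuous F)
    {Mf : ℝ} (hMf : ∀ t, ‖F t‖ ≤ Mf)
    (h : Tendsto (fun z : ℝ =>
      ((ν (Set.Icc (-z) z)).toReal)⁻¹ * ∫ t in Set.Icc (-z) z, ‖F t‖ ∂μ)
      Filter.atTop (nhds 0)) :
    Tendsto (fun z : ℝ =>
      (∫⁻ t in Set.Icc (-z) z, ENNReal.ofReal ‖F t‖ ∂μ) / ν (Set.Icc (-z) z))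
      atTop (𝓝 0) := by
  have hνtop := tendsto_icc_top hν
  have hev : ∀ᶠ z : ℝ in atTop, (1 : ℝ≥0∞) < ν (Set.Icc (-z) z) :=
    hνtop.eventually (lt_mem_nhds (by simp : (1 : ℝ≥0∞) < ⊤))
  have key : ∀ᶠ z : ℝ in atTop,
      ENNReal.ofReal (((ν (Set.Icc (-z) z)).toReal)⁻¹ * ∫ t in Set.Icc (-z) z, ‖F t‖ ∂μ)
        = (∫⁻ t in Set.Icc (-z) z, ENNReal.ofReal ‖F t‖ ∂μ) / ν (Set.Icc (-z) z) := by
    filter_upwards [hev] with z hz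
    set N := ∫⁻ t in Set.Icc (-z) z, ENNReal.ofReal ‖F t‖ ∂μ with hN
    have hν0 : ν (Set.Icc (-z) z) ≠ 0 := fun h0 => by simp [h0] at hz
    have hνt : ν (Set.Icc (-z) z) ≠ ⊤ := (finIcc hν _ _).ne
    have hNt : N ≠ ⊤ := by
      have : N ≤ ENNReal.ofReal Mf * μ (Set.Icc (-z) z) := by
        rw [hN]
        calc ∫⁻ t in Set.Icc (-z) z, ENNReal.ofReal ‖F t‖ ∂μ
            ≤ ∫⁻ _ in Set.Icc (-z) z, ENNReal.ofReal Mf ∂μ :=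
              lintegral_mono fun t => ENNReal.ofReal_le_ofReal (hMf t)
        _ = ENNReal.ofReal Mf * μ (Set.Icc (-z) z) := setLIntegral_const _ _
      exact (this.trans_lt (ENNReal.mul_lt_top ENNReal.ofReal_lt_top (finIcc hμ _ _))).ne
    have hint : ∫ t in Set.Icc (-z) z, ‖F t‖ ∂μ = N.toReal := by
      rw [hN, integral_eq_lintegral_of_nonneg_ae (Eventually.of_forall fun t => norm_nonneg _)
        (hFc.norm.aestronglyMeasurable.restrict)]
    rw [hint, ← ENNReal.toReal_inv, ← ENNReal.toReal_mul,
      ENNReal.ofReal_toReal (by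
        refine ENNReal.mul_ne_top (by simp [hν0]) hNt),
      ENNReal.div_eq_inv_mul]
  have h2 : Tendsto (fun z : ℝ => ENNReal.ofReal
      (((ν (Set.Icc (-z) z)).toReal)⁻¹ * ∫ t in Set.Icc (-z) z, ‖F t‖ ∂μ)) atTop (𝓝 0) := by
    have := ENNReal.tendsto_ofReal h
    simpa using this
  exact h2.congr' key

lemma Jlimit (hμ : InM μ) (hμ1 : M1 μ) (hν : InM ν) (hν1 : M1 ν)
    {F : ℝ → ℝ} (hFc : Continuous F) {Mf : ℝ} (hMf : ∀ t, ‖F t‖ ≤ Mf)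
    (h : Tendsto (fun z : ℝ =>
      ((ν (Set.Icc (-z) z)).toReal)⁻¹ * ∫ t in Set.Icc (-z) z, ‖F t‖ ∂μ)
      Filter.atTop (nhds 0))
    {r : ℝ} (hr : 0 ≤ r) :
    Tendsto (fun z : ℝ =>
      (∫⁻ t in Set.Icc (-z) z, ENNReal.ofReal ‖F (t - r)‖ ∂μ) / ν (Set.Icc (-z) z))
      atTop (𝓝 0) := by
  set N : ℝ → ℝ≥0∞ := fun w => ∫⁻ t in Set.Icc (-w) w, ENNReal.ofReal ‖F t‖ ∂μ with hNdef
  have hΛ := erg_ennreal hμ hν hFc hMf h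
  obtain ⟨β, C, hβ, hC, hshift⟩ := lintegral_shift_le hμ hμ1
    (g := fun t => ENNReal.ofReal ‖F t‖)
    (ENNReal.measurable_ofReal.comp hFc.norm.measurable)
    (M := ENNReal.ofReal Mf) (fun t => ENNReal.ofReal_le_ofReal (hMf t))
    ENNReal.ofReal_ne_top hr
  obtain ⟨κ, hκ0, hκt, hκ⟩ := nu_growth hν1 hr
  have hνtop := tendsto_icc_top hν
  set U : ℝ → ℝ≥0∞ := fun z => β * κ * (N (z + r) / ν (Set.Icc (-(z + r)) (z + r)))
    + C * (ν (Set.Icc (-z) z))⁻¹ with hU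
  have hUlim : Tendsto U atTop (𝓝 0) := by
    have h1 : Tendsto (fun z : ℝ => N (z + r) / ν (Set.Icc (-(z + r)) (z + r))) atTop (𝓝 0) :=
      hΛ.comp (tendsto_atTop_add_const_right atTop r tendsto_id)
    have h1' : Tendsto (fun z : ℝ => β * κ * (N (z + r) / ν (Set.Icc (-(z + r)) (z + r))))
        atTop (𝓝 0) := by
      have := ENNReal.Tendsto.const_mul h1 (Or.inr (ENNReal.mul_ne_top hβ hκt))
      simpa using this
    have h2 : Tendsto (fun z : ℝ => C * (ν (Set.Icc (-z) z))⁻¹) atTop (𝓝 0) := by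
      have hinv : Tendsto (fun z : ℝ => (ν (Set.Icc (-z) z))⁻¹) atTop (𝓝 0) := by
        have := Filter.Tendsto.inv hνtop
        simpa using this
      have := ENNReal.Tendsto.const_mul hinv (Or.inr hC)
      simpa using this
    simpa only [add_zero] using h1'.add h2
  refine tendsto_of_tendsto_of_tendsto_of_le_of_le' tendsto_const_nhds hUlim
    (Eventually.of_forall fun z => zero_le) ?_
  filter_upwards [hκ, hνtop.eventually (lt_mem_nhds (by simp : (1 : ℝ≥0∞) < ⊤))] with z hκz hν1z
  have hν0 : ν (Set.Icc (-z) z) ≠ 0 := fun h0 => by simp [h0] at hν1z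
  have key : (ν (Set.Icc (-z) z))⁻¹ ≤ κ * (ν (Set.Icc (-(z + r)) (z + r)))⁻¹ := by
    have h1 : (κ * ν (Set.Icc (-z) z))⁻¹ ≤ (ν (Set.Icc (-(z + r)) (z + r)))⁻¹ :=
      ENNReal.inv_le_inv.2 hκz
    calc (ν (Set.Icc (-z) z))⁻¹ = κ * (κ * ν (Set.Icc (-z) z))⁻¹ := by
          rw [ENNReal.mul_inv (Or.inl hκ0) (Or.inl hκt), ← mul_assoc,
            ENNReal.mul_inv_cancel hκ0 hκt, one_mul]
    _ ≤ κ * (ν (Set.Icc (-(z + r)) (z + r)))⁻¹ := mul_le_mul_right h1 κ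
  calc (∫⁻ t in Set.Icc (-z) z, ENNReal.ofReal ‖F (t - r)‖ ∂μ) / ν (Set.Icc (-z) z)
      ≤ (β * N (z + r) + C) / ν (Set.Icc (-z) z) :=
        ENNReal.div_le_div_right (hshift z) _
  _ = β * N (z + r) * (ν (Set.Icc (-z) z))⁻¹ + C * (ν (Set.Icc (-z) z))⁻¹ := by
        rw [ENNReal.add_div]
        rw [div_eq_mul_inv, div_eq_mul_inv]
  _ ≤ β * N (z + r) * (κ * (ν (Set.Icc (-(z + r)) (z + r)))⁻¹) + C * (ν (Set.Icc (-z) z))⁻¹ :=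
        add_le_add_left (mul_le_mul_right key _) _
  _ = U z := by
        rw [hU]
        simp only [div_eq_mul_inv]
        ring


lemma integrableOn_exp_mul_Iic {b : ℝ} (hb : 0 < b) (t : ℝ) :
    IntegrableOn (fun s => Real.exp (b * s)) (Set.Iic t) := by
  have h1 : IntegrableOn (fun x => Real.exp (-b * x)) (Set.Ioi (-t)) :=
    exp_neg_integrableOn_Ioi (-t) hb
  have h2 : IntegrableOn (fun x => Real.exp (-b * x)) (Set.Ici (-t)) := by
    rwa [integrableOn_Ici_iff_integrableOn_Ioi]
  have h3 := ((Measure.measurePreserving_neg (volume : Measure ℝ)).integrableOn_comp_preimage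
      (Homeomorph.neg ℝ).measurableEmbedding (f := fun x => Real.exp (-b * x))
      (s := Set.Ici (-t))).2 h2
  have h4 : (Neg.neg : ℝ → ℝ) ⁻¹' Set.Ici (-t) = Set.Iic t := by
    ext x; simp
  rw [h4] at h3
  refine h3.congr_fun (fun x _ => ?_) measurableSet_Iic
  simp only [Function.comp]
  ring_nf

end CPE

theorem convolution_preserves_ergodic (μ ν : Measure ℝ)
    (hμ : InM μ) (hν : InM ν) (hμ1 : M1 μ) (hν1 : M1 ν) (hM2 : M2 μ ν)
    (c : ℝ → ℝ) (hccont : Continuous c) (hcpos : 0 < ⨅ t, c t)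
    (F : ℝ → ℝ) (hF : Erg μ ν F) :
    Erg μ ν (fun t => ∫ s in Set.Iic t, Real.exp (-(∫ u in Set.Ioc s t, c u)) * F s) := by
  classical
  obtain ⟨⟨hFcont, Mf0, hMf0⟩, hFerg⟩ := hF
  set Mf := max Mf0 0 with hMfdef
  have hMf : ∀ t, ‖F t‖ ≤ Mf := fun t => (hMf0 t).trans (le_max_left _ _)
  set cs := ⨅ t, c t with hcsdef
  have hbdd : BddBelow (Set.range c) := by
    by_contra hb
    rw [hcsdef, Real.iInf_of_not_bddBelow hb] at hcpos
    exact lt_irrefl 0 hcpos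
  have hcsle : ∀ t, cs ≤ c t := fun t => ciInf_le hbdd t
  set Cc : ℝ → ℝ := fun t => ∫ u in (0:ℝ)..t, c u with hCcdef
  have hCccont : Continuous Cc :=
    intervalIntegral.continuous_primitive (fun a b => hccont.intervalIntegrable a b) 0
  have hCcsub : ∀ {s t : ℝ}, ∫ u in s..t, c u = Cc t - Cc s := by
    intro s t
    simp only [hCcdef]
    exact (intervalIntegral.integral_interval_sub_left
      (hccont.intervalIntegrable 0 t) (hccont.intervalIntegrable 0 s)).symm
  have hkernel : ∀ {s t : ℝ}, s ≤ t → ∫ u in Set.Ioc s t, c u = Cc t - Cc s := by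
    intro s t hst
    rw [← intervalIntegral.integral_of_le hst]
    exact hCcsub
  have hgrow : ∀ {s t : ℝ}, s ≤ t → cs * (t - s) ≤ Cc t - Cc s := by
    intro s t hst
    have h1 : ∫ u in s..t, cs ≤ ∫ u in s..t, c u :=
      intervalIntegral.integral_mono_on hst intervalIntegrable_const
        (hccont.intervalIntegrable s t) fun x _ => hcsle x
    rw [intervalIntegral.integral_const, smul_eq_mul, hCcsub] at h1
    have h2 : (t - s) * cs = cs * (t - s) := by ring
    linarith
  set H : ℝ → ℝ := fun s => Real.exp (Cc s) * F s with hHdef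
  have hHcont : Continuous H := (Real.continuous_exp.comp hCccont).mul hFcont
  have hHint : ∀ t, IntegrableOn H (Set.Iic t) := by
    intro t
    refine Integrable.mono'
      ((CPE.integrableOn_exp_mul_Iic hcpos t).const_mul (Mf * Real.exp (Cc t - cs * t)))
      hHcont.aestronglyMeasurable.restrict ?_
    rw [ae_restrict_iff' measurableSet_Iic]
    refine Eventually.of_forall fun s hs => ?_
    have hg1 := hgrow hs
    have hC : Cc s ≤ (Cc t - cs * t) + cs * s := by nlinarith [hg1]
    calc ‖H s‖ = Real.exp (Cc s) * ‖F s‖ := by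
          simp only [hHdef, norm_mul, Real.norm_eq_abs, abs_of_pos (Real.exp_pos _)]
    _ ≤ Real.exp ((Cc t - cs * t) + cs * s) * Mf :=
          mul_le_mul (Real.exp_le_exp.2 hC) (hMf s) (norm_nonneg _) (Real.exp_pos _).le
    _ = Mf * Real.exp (Cc t - cs * t) * Real.exp (cs * s) := by
          rw [Real.exp_add]; ring
  set g : ℝ → ℝ := fun t => Real.exp (-(Cc t)) * ∫ s in Set.Iic t, H s with hgdef
  have funeq : (fun t => ∫ s in Set.Iic t, Real.exp (-(∫ u in Set.Ioc s t, c u)) * F s) = g := by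
    funext t
    simp only [hgdef]
    rw [← integral_const_mul]
    refine setIntegral_congr_fun measurableSet_Iic fun s hs => ?_
    have hs' : s ≤ t := hs
    rw [hkernel hs']
    simp only [hHdef]
    have he : Real.exp (-(Cc t - Cc s)) = Real.exp (-(Cc t)) * Real.exp (Cc s) := by
      rw [← Real.exp_add]; ring_nf
    rw [he]; ring
  set k : ℝ → ℝ≥0∞ := fun r => ENNReal.ofReal (Real.exp (-(cs * r))) with hkdef
  have hkmeas : Measurable k := ENNReal.measurable_ofReal.comp
    (Real.continuous_exp.comp ((continuous_const.mul continuous_id).neg)).measurable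
  have hkne : ∀ r, k r ≠ ⊤ := fun r => by simp only [hkdef]; exact ENNReal.ofReal_ne_top
  set Q : ℝ → ℝ≥0∞ := fun t => ∫⁻ r in Set.Ioi 0, k r * ENNReal.ofReal ‖F (t - r)‖ with hQdef
  have hWcont : ∀ t : ℝ, Continuous fun s => Real.exp (-(cs * (t - s))) * ‖F s‖ := fun t =>
    (Real.continuous_exp.comp
      ((continuous_const.mul (continuous_const.sub continuous_id)).neg)).mul hFcont.norm
  have hWint : ∀ t : ℝ, IntegrableOn (fun s => Real.exp (-(cs * (t - s))) * ‖F s‖)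
      (Set.Iic t) := by
    intro t
    refine Integrable.mono'
      ((CPE.integrableOn_exp_mul_Iic hcpos t).const_mul (Mf * Real.exp (-(cs * t))))
      (hWcont t).aestronglyMeasurable.restrict ?_
    rw [ae_restrict_iff' measurableSet_Iic]
    refine Eventually.of_forall fun s hs => ?_
    have h1 : Real.exp (-(cs * (t - s))) = Real.exp (-(cs * t)) * Real.exp (cs * s) := by
      rw [← Real.exp_add]; ring_nf
    calc ‖Real.exp (-(cs * (t - s))) * ‖F s‖‖
        = Real.exp (-(cs * (t - s))) * ‖F s‖ := by
          rw [Real.norm_eq_abs, abs_of_nonneg (mul_nonneg (Real.exp_pos _).le (norm_nonneg _))]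
    _ ≤ Real.exp (-(cs * (t - s))) * Mf := mul_le_mul_of_nonneg_left (hMf s) (Real.exp_pos _).le
    _ = Mf * Real.exp (-(cs * t)) * Real.exp (cs * s) := by rw [h1]; ring
  have hgW : ∀ t : ℝ, ‖g t‖ ≤ ∫ s in Set.Iic t, Real.exp (-(cs * (t - s))) * ‖F s‖ := by
    intro t
    have h0 : ‖g t‖ ≤ Real.exp (-(Cc t)) * ∫ s in Set.Iic t, ‖H s‖ := by
      show ‖Real.exp (-(Cc t)) * ∫ s in Set.Iic t, H s‖ ≤ _
      calc ‖Real.exp (-(Cc t)) * ∫ s in Set.Iic t, H s‖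
          = Real.exp (-(Cc t)) * ‖∫ s in Set.Iic t, H s‖ := by
            rw [norm_mul, Real.norm_of_nonneg (Real.exp_pos _).le]
      _ ≤ Real.exp (-(Cc t)) * ∫ s in Set.Iic t, ‖H s‖ :=
            mul_le_mul_of_nonneg_left (norm_integral_le_integral_norm _) (Real.exp_pos _).le
    refine h0.trans ?_
    rw [← integral_const_mul]
    refine setIntegral_mono_on ((hHint t).norm.const_mul _) (hWint t)
      measurableSet_Iic fun s hs => ?_
    have hs' : s ≤ t := hs
    have hC : Cc s - Cc t ≤ -(cs * (t - s)) := by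
      have := hgrow hs'; linarith
    have he : Real.exp (Cc s - Cc t) = Real.exp (-(Cc t)) * Real.exp (Cc s) := by
      rw [← Real.exp_add]; ring_nf
    calc Real.exp (-(Cc t)) * ‖H s‖ = Real.exp (Cc s - Cc t) * ‖F s‖ := by
          simp only [hHdef, norm_mul, Real.norm_eq_abs, abs_of_pos (Real.exp_pos _)]
          rw [he]; ring
    _ ≤ Real.exp (-(cs * (t - s))) * ‖F s‖ :=
          mul_le_mul_of_nonneg_right (Real.exp_le_exp.2 hC) (norm_nonneg _)
  have hsub : ∀ t : ℝ,
      ∫⁻ s in Set.Iic t, ENNReal.ofReal (Real.exp (-(cs * (t - s))) * ‖F s‖) = Q t := by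
    intro t
    have hmp : MeasurePreserving (fun x : ℝ => t - x) volume volume :=
      Measure.measurePreserving_sub_left volume t
    have hmeas : Measurable fun s => ENNReal.ofReal (Real.exp (-(cs * (t - s))) * ‖F s‖) :=
      ENNReal.measurable_ofReal.comp (hWcont t).measurable
    have h1 := hmp.setLIntegral_comp_preimage (s := Set.Iic t) measurableSet_Iic hmeas
    have hpre : (fun x : ℝ => t - x) ⁻¹' Set.Iic t = Set.Ici 0 := by
      ext r
      simp only [Set.mem_preimage, Set.mem_Iic, Set.mem_Ici]
      constructor <;> intro h <;> linarith
    rw [hpre] at h1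
    rw [← h1]
    have h2 : ∫⁻ r in Set.Ici (0:ℝ),
          ENNReal.ofReal (Real.exp (-(cs * (t - (t - r)))) * ‖F (t - r)‖)
        = ∫⁻ r in Set.Ioi (0:ℝ),
          ENNReal.ofReal (Real.exp (-(cs * (t - (t - r)))) * ‖F (t - r)‖) :=
      setLIntegral_congr (Ioi_ae_eq_Ici).symm
    rw [h2]
    simp only [hQdef, hkdef]
    refine setLIntegral_congr_fun measurableSet_Ioi (fun r hr => ?_)
    have h3 : t - (t - r) = r := by ring
    rw [h3, ENNReal.ofReal_mul (Real.exp_pos _).le]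
  have hQle : ∀ t, ENNReal.ofReal ‖g t‖ ≤ Q t := by
    intro t
    have h1 : ENNReal.ofReal ‖g t‖
        ≤ ENNReal.ofReal (∫ s in Set.Iic t, Real.exp (-(cs * (t - s))) * ‖F s‖) :=
      ENNReal.ofReal_le_ofReal (hgW t)
    rwa [ofReal_integral_eq_lintegral_ofReal (hWint t)
      (Eventually.of_forall fun s => mul_nonneg (Real.exp_pos _).le (norm_nonneg _)),
      hsub t] at h1
  set IK : ℝ≥0∞ := ∫⁻ r in Set.Ioi 0, k r with hIKdef
  have hIKne : IK ≠ ⊤ := by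
    have hint : IntegrableOn (fun r => Real.exp (-(cs * r))) (Set.Ioi (0:ℝ)) := by
      refine (exp_neg_integrableOn_Ioi 0 hcpos).congr_fun (fun x _ => by ring_nf)
        measurableSet_Ioi
    simp only [hIKdef, hkdef]
    rw [← ofReal_integral_eq_lintegral_ofReal hint
      (Eventually.of_forall fun r => (Real.exp_pos _).le)]
    exact ENNReal.ofReal_ne_top
  have hQbound : ∀ t, Q t ≤ ENNReal.ofReal Mf * IK := by
    intro t
    simp only [hQdef]
    calc ∫⁻ r in Set.Ioi 0, k r * ENNReal.ofReal ‖F (t - r)‖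
        ≤ ∫⁻ r in Set.Ioi 0, k r * ENNReal.ofReal Mf :=
          lintegral_mono fun r => mul_le_mul_right (ENNReal.ofReal_le_ofReal (hMf _)) _
    _ = IK * ENNReal.ofReal Mf := lintegral_mul_const' _ _ ENNReal.ofReal_ne_top
    _ = ENNReal.ofReal Mf * IK := mul_comm _ _
  have hgbdd : ∀ t, ‖g t‖ ≤ (ENNReal.ofReal Mf * IK).toReal := by
    intro t
    have h1 : ENNReal.ofReal ‖g t‖ ≤ ENNReal.ofReal Mf * IK := (hQle t).trans (hQbound t)
    have h2 := ENNReal.toReal_mono (ENNReal.mul_ne_top ENNReal.ofReal_ne_top hIKne) h1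
    rwa [ENNReal.toReal_ofReal (norm_nonneg _)] at h2
  have hgc : Continuous g := by
    simp only [hgdef]
    refine (Real.continuous_exp.comp hCccont.neg).mul ?_
    have heq : (fun t => ∫ s in Set.Iic t, H s)
        = fun t => (∫ s in Set.Iic 0, H s) + ∫ s in (0:ℝ)..t, H s := by
      funext t
      have := intervalIntegral.integral_Iic_sub_Iic (hHint 0) (hHint t)
      linarith
    rw [heq]
    exact continuous_const.add (intervalIntegral.continuous_primitive
      (fun a b => hHcont.intervalIntegrable a b) 0)
  -- ergodic part
  set J : ℝ → ℝ → ℝ≥0∞ :=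
    fun z r => ∫⁻ t in Set.Icc (-z) z, ENNReal.ofReal ‖F (t - r)‖ ∂μ with hJdef
  have hfinz : ∀ z : ℝ, IsFiniteMeasure (μ.restrict (Set.Icc (-z) z)) := fun z =>
    ⟨by rw [Measure.restrict_apply_univ]; exact CPE.finIcc hμ _ _⟩
  have hJmeas : ∀ z : ℝ, Measurable fun r => J z r := by
    intro z
    haveI := hfinz z
    exact Measurable.lintegral_prod_right (f := fun r t => ENNReal.ofReal ‖F (t - r)‖)
      (ENNReal.measurable_ofReal.comp
        (hFcont.norm.comp (continuous_snd.sub continuous_fst)).measurable)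
  have hTon : ∀ z : ℝ, ∫⁻ t in Set.Icc (-z) z, Q t ∂μ = ∫⁻ r in Set.Ioi 0, k r * J z r := by
    intro z
    haveI := hfinz z
    have hunc : AEMeasurable (Function.uncurry fun t r => k r * ENNReal.ofReal ‖F (t - r)‖)
        ((μ.restrict (Set.Icc (-z) z)).prod (volume.restrict (Set.Ioi 0))) := by
      refine Measurable.aemeasurable ?_
      exact (hkmeas.comp measurable_snd).mul (ENNReal.measurable_ofReal.comp
        (hFcont.norm.comp (continuous_fst.sub continuous_snd)).measurable)
    calc ∫⁻ t in Set.Icc (-z) z, Q t ∂μ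
        = ∫⁻ r in Set.Ioi 0, ∫⁻ t in Set.Icc (-z) z, k r * ENNReal.ofReal ‖F (t - r)‖ ∂μ :=
          lintegral_lintegral_swap hunc
    _ = ∫⁻ r in Set.Ioi 0, k r * J z r := by
          refine lintegral_congr fun r => ?_
          simp only [hJdef]
          exact lintegral_const_mul' _ _ (hkne r)
  obtain ⟨K, hKne, hKev⟩ := CPE.m2_bound hM2 hν
  have hνev : ∀ᶠ z : ℝ in atTop, ν (Set.Icc (-z) z) ≠ 0 := by
    filter_upwards [(CPE.tendsto_icc_top hν).eventually
      (lt_mem_nhds (by simp : (1:ℝ≥0∞) < ⊤))] with z hz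
    exact fun h0 => by simp [h0] at hz
  have hDCT : Tendsto (fun z : ℝ =>
      ∫⁻ r in Set.Ioi 0, k r * J z r / ν (Set.Icc (-z) z)) atTop (𝓝 0) := by
    have hmain := tendsto_lintegral_filter_of_dominated_convergence
      (μ := volume.restrict (Set.Ioi (0:ℝ))) (l := atTop)
      (F := fun z r => k r * J z r / ν (Set.Icc (-z) z)) (f := fun _ => (0:ℝ≥0∞))
      (fun r => k r * (ENNReal.ofReal Mf * K)) ?_ ?_ ?_ ?_
    · simpa using hmain
    · exact Eventually.of_forall fun z => (hkmeas.mul (hJmeas z)).div_const _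
    · filter_upwards [hKev, hνev] with z hKz hνz
      refine Eventually.of_forall fun r => ?_
      have hJle : J z r ≤ ENNReal.ofReal Mf * μ (Set.Icc (-z) z) := by
        simp only [hJdef]
        calc ∫⁻ t in Set.Icc (-z) z, ENNReal.ofReal ‖F (t - r)‖ ∂μ
            ≤ ∫⁻ _ in Set.Icc (-z) z, ENNReal.ofReal Mf ∂μ :=
              lintegral_mono fun t => ENNReal.ofReal_le_ofReal (hMf _)
        _ = ENNReal.ofReal Mf * μ (Set.Icc (-z) z) := setLIntegral_const _ _
      calc k r * J z r / ν (Set.Icc (-z) z)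
          ≤ k r * (ENNReal.ofReal Mf * (K * ν (Set.Icc (-z) z))) / ν (Set.Icc (-z) z) := by
            gcongr
            exact hJle.trans (mul_le_mul_right hKz _)
      _ = k r * (ENNReal.ofReal Mf * K) * (ν (Set.Icc (-z) z) / ν (Set.Icc (-z) z)) := by
            rw [← mul_div_assoc]
            congr 1
            ring
      _ ≤ k r * (ENNReal.ofReal Mf * K) := by
            refine (mul_le_mul_right ENNReal.div_self_le_one _).trans_eq (mul_one _)
    · rw [lintegral_mul_const' _ _ (ENNReal.mul_ne_top ENNReal.ofReal_ne_top hKne)]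
      exact ENNReal.mul_ne_top hIKne (ENNReal.mul_ne_top ENNReal.ofReal_ne_top hKne)
    · refine (ae_restrict_mem measurableSet_Ioi).mono fun r hr => ?_
      have hJ := CPE.Jlimit hμ hμ1 hν hν1 hFcont hMf hFerg (le_of_lt hr)
      have h2 := ENNReal.Tendsto.const_mul hJ (Or.inr (hkne r))
      simp only [mul_zero] at h2
      refine Tendsto.congr (fun z => ?_) h2
      simp only [hJdef]
      rw [mul_div_assoc]
  rw [funeq]
  refine ⟨⟨hgc, (ENNReal.ofReal Mf * IK).toReal, hgbdd⟩, ?_⟩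
  have hchain : ∀ z : ℝ, ((ν (Set.Icc (-z) z)).toReal)⁻¹ * ∫ t in Set.Icc (-z) z, ‖g t‖ ∂μ
      ≤ (∫⁻ r in Set.Ioi 0, k r * J z r / ν (Set.Icc (-z) z)).toReal := by
    intro z
    haveI := hfinz z
    have hPfin : (∫⁻ t in Set.Icc (-z) z, Q t ∂μ) ≠ ⊤ := by
      have hle : (∫⁻ t in Set.Icc (-z) z, Q t ∂μ)
          ≤ (ENNReal.ofReal Mf * IK) * μ (Set.Icc (-z) z) := by
        calc ∫⁻ t in Set.Icc (-z) z, Q t ∂μ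
            ≤ ∫⁻ _ in Set.Icc (-z) z, ENNReal.ofReal Mf * IK ∂μ :=
              lintegral_mono fun t => hQbound t
        _ = (ENNReal.ofReal Mf * IK) * μ (Set.Icc (-z) z) := setLIntegral_const _ _
      exact (hle.trans_lt (ENNReal.mul_lt_top
        (ENNReal.mul_lt_top ENNReal.ofReal_lt_top hIKne.lt_top) (CPE.finIcc hμ _ _))).ne
    have hlint : ∫ t in Set.Icc (-z) z, ‖g t‖ ∂μ
        = (∫⁻ t in Set.Icc (-z) z, ENNReal.ofReal ‖g t‖ ∂μ).toReal := by
      rw [integral_eq_lintegral_of_nonneg_ae (Eventually.of_forall fun t => norm_nonneg _)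
        hgc.norm.aestronglyMeasurable.restrict]
    have hle1 : (∫⁻ t in Set.Icc (-z) z, ENNReal.ofReal ‖g t‖ ∂μ)
        ≤ ∫⁻ t in Set.Icc (-z) z, Q t ∂μ :=
      lintegral_mono fun t => hQle t
    have hdivpull : ∫⁻ r in Set.Ioi 0, k r * J z r / ν (Set.Icc (-z) z)
        = (∫⁻ t in Set.Icc (-z) z, Q t ∂μ) / ν (Set.Icc (-z) z) := by
      rw [hTon z]
      simp only [div_eq_mul_inv]
      exact lintegral_mul_const'' _ ((hkmeas.mul (hJmeas z)).aemeasurable)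
    calc ((ν (Set.Icc (-z) z)).toReal)⁻¹ * ∫ t in Set.Icc (-z) z, ‖g t‖ ∂μ
        ≤ ((ν (Set.Icc (-z) z)).toReal)⁻¹ * (∫⁻ t in Set.Icc (-z) z, Q t ∂μ).toReal := by
          rw [hlint]
          exact mul_le_mul_of_nonneg_left (ENNReal.toReal_mono hPfin hle1)
            (inv_nonneg.2 ENNReal.toReal_nonneg)
    _ = ((∫⁻ t in Set.Icc (-z) z, Q t ∂μ) / ν (Set.Icc (-z) z)).toReal := by
          rw [ENNReal.toReal_div]; ring
    _ = (∫⁻ r in Set.Ioi 0, k r * J z r / ν (Set.Icc (-z) z)).toReal := by rw [hdivpull]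
  refine squeeze_zero (fun z => mul_nonneg (inv_nonneg.2 ENNReal.toReal_nonneg)
    (integral_nonneg fun t => norm_nonneg _)) hchain ?_
  have hfin := (ENNReal.tendsto_toReal (by simp : (0:ℝ≥0∞) ≠ ⊤)).comp hDCT
  exact hfin
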